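/- Let K be a field. A function f : K → ℝ≥0 is an absolute value on K if and only if it satisfies: f(x) = 0 if and only if x = 0; f(xy) = f(x)·f(y) for all x, y; and f(x + y) ≤ 2 · max(f(x), f(y)) for all x, y ∈ K. -/

import Mathlib

open NNReal
open Finset in

/-- A function `f : K → ℝ≥0` is an absolute value (vanishing exactly at `0`,
multiplicative, triangle inequality) iff it vanishes exactly at `0`, is
multiplicative, and satisfies `f (x + y) ≤ 2 * max (f x) (f y)`. -/
theorem absoluteValue_iff_two_max {K : Type*} [Field K] (f : K → ℝ≥0) :
    ((∀ x, f x = 0 ↔ x = 0) ∧ (∀ x y, f (x * y) = f x * f y) ∧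
        (∀ x y, f (x + y) ≤ f x + f y)) ↔
      ((∀ x, f x = 0 ↔ x = 0) ∧ (∀ x y, f (x * y) = f x * f y) ∧
        (∀ x y, f (x + y) ≤ 2 * max (f x) (f y))) := by
  constructor
  · rintro ⟨h0, hm, ht⟩
    refine ⟨h0, hm, fun x y => (ht x y).trans ?_⟩
    rw [two_mul]
    exact add_le_add (le_max_left _ _) (le_max_right _ _)
  · rintro ⟨h0, hm, h2⟩
    refine ⟨h0, hm, ?_⟩
    have hf0 : f 0 = 0 := (h0 0).mpr rfl
    have hf1 : f 1 = 1 := by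
      have h := hm 1 1
      rw [mul_one] at h
      have h1 : f 1 ≠ 0 := fun h' => one_ne_zero ((h0 1).mp h')
      exact mul_left_cancel₀ h1 (by rw [mul_one, ← h])
    have hpow : ∀ (x : K) (n : ℕ), f (x ^ n) = f x ^ n := by
      intro x n
      induction n with
      | zero => simpa using hf1
      | succ n ih => rw [pow_succ, pow_succ, hm, ih]
    -- key induction: sum of 2^k terms, each bounded by M
    have hsum2 : ∀ (k : ℕ) (a : ℕ → K) (M : ℝ≥0), (∀ i, f (a i) ≤ M) →
        f (∑ i ∈ range (2 ^ k), a i) ≤ 2 ^ k * M := by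
      intro k
      induction k with
      | zero => intro a M hM; simpa using hM 0
      | succ k ih =>
        intro a M hM
        have hsplit : ∑ i ∈ range (2 ^ (k + 1)), a i
            = (∑ i ∈ range (2 ^ k), a i) + ∑ i ∈ range (2 ^ k), a (2 ^ k + i) := by
          rw [pow_succ, mul_two, Finset.sum_range_add]
        calc f (∑ i ∈ range (2 ^ (k + 1)), a i)
            ≤ 2 * max (f (∑ i ∈ range (2 ^ k), a i))
                (f (∑ i ∈ range (2 ^ k), a (2 ^ k + i))) := by rw [hsplit]; exact h2 _ _
          _ ≤ 2 * (2 ^ k * M) := by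
              gcongr
              exact max_le (ih a M hM) (ih (fun i => a (2 ^ k + i)) M (fun i => hM _))
          _ = 2 ^ (k + 1) * M := by ring
    -- general n, with bound 2 n M
    have hsumn : ∀ (n : ℕ) (a : ℕ → K) (M : ℝ≥0), (∀ i, f (a i) ≤ M) →
        f (∑ i ∈ range n, a i) ≤ 2 * n * M := by
      intro n a M hM
      rcases Nat.eq_zero_or_pos n with rfl | hn
      · simpa using hf0
      set k := Nat.clog 2 n with hk
      have hk1 : n ≤ 2 ^ k := Nat.le_pow_clog one_lt_two n
      have hk2 : 2 ^ k ≤ 2 * n := by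
        rcases Nat.eq_or_lt_of_le hn with h1 | h1
        · simp [hk, ← h1, Nat.clog]
        · have := Nat.pow_pred_clog_lt_self one_lt_two h1
          have hkpos : 1 ≤ k := by
            by_contra hc
            interval_cases k
            · simp at hk1; omega
          calc 2 ^ k = 2 * 2 ^ (k - 1) := by
                rw [← pow_succ']
                congr 1
                omega
            _ ≤ 2 * n := by
                have : 2 ^ (k - 1) < n := this
                omega
      set b : ℕ → K := fun i => if i < n then a i else 0 with hb
      have hbsum : ∑ i ∈ range (2 ^ k), b i = ∑ i ∈ range n, a i := by
        rw [← Finset.sum_subset (Finset.range_subset_range.mpr hk1)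
          (fun i _ hi => by simp [hb, Finset.mem_range.not.mp hi])]
        exact Finset.sum_congr rfl fun i hi => by simp [hb, Finset.mem_range.mp hi]
      have hbM : ∀ i, f (b i) ≤ M := by
        intro i
        by_cases hi : i < n
        · simpa [hb, hi] using hM i
        · simp [hb, hi, hf0]
      calc f (∑ i ∈ range n, a i) = f (∑ i ∈ range (2 ^ k), b i) := by rw [hbsum]
        _ ≤ 2 ^ k * M := hsum2 k b M hbM
        _ ≤ (2 * n : ℕ) * M := by
            gcongr
            exact_mod_cast hk2
        _ = 2 * n * M := by push_cast; ring
    -- f of naturals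
    have hnat : ∀ n : ℕ, f (n : K) ≤ 2 * n := by
      intro n
      have : ((n : K)) = ∑ _i ∈ range n, (1 : K) := by simp
      rw [this]
      calc f (∑ _i ∈ range n, (1 : K)) ≤ 2 * n * 1 :=
            hsumn n (fun _ => 1) 1 (fun _ => by rw [hf1])
        _ = 2 * n := by rw [mul_one]
    -- main bound via binomial theorem
    intro x y
    have key : ∀ n : ℕ, f (x + y) ^ n ≤ 4 * (n + 1) * (f x + f y) ^ n := by
      intro n
      set a : ℕ → K := fun k => x ^ k * y ^ (n - k) * (n.choose k : K) with ha
      have hterm : ∀ k, f (a k) ≤ 2 * (n.choose k) * (f x ^ k * f y ^ (n - k)) := by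
        intro k
        calc f (a k) = f x ^ k * f y ^ (n - k) * f (n.choose k : K) := by
              rw [ha, hm, hm, hpow, hpow]
          _ ≤ f x ^ k * f y ^ (n - k) * (2 * n.choose k) := by gcongr; exact hnat _
          _ = 2 * (n.choose k) * (f x ^ k * f y ^ (n - k)) := by ring
      calc f (x + y) ^ n = f ((x + y) ^ n) := (hpow _ _).symm
        _ = f (∑ k ∈ range (n + 1), a k) := by rw [add_pow]
        _ ≤ 2 * ((n + 1 : ℕ) : ℝ≥0) * (2 * ((f x + f y) ^ n)) := by
            refine hsumn (n + 1) a (2 * ((f x + f y) ^ n)) fun k => ?_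
            by_cases hk : k ≤ n
            · calc f (a k) ≤ 2 * (n.choose k) * (f x ^ k * f y ^ (n - k)) := hterm k
                _ ≤ 2 * ((f x + f y) ^ n) := by
                    rw [mul_assoc]
                    gcongr
                    rw [add_pow]
                    refine Finset.single_le_sum (f := fun i => f x ^ i * f y ^ (n - i) * n.choose i)
                      (fun i _ => zero_le) (Finset.mem_range.mpr (Nat.lt_succ_of_le hk))
                      |>.trans_eq' ?_
                    ring
            · have : n.choose k = 0 := Nat.choose_eq_zero_of_lt (by omega)
              have : f (a k) = 0 := by
                rw [ha]
                simp only [this]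
                push_cast
                simp [hm, hf0]
              simp [this]
        _ = 4 * (n + 1) * (f x + f y) ^ n := by push_cast; ring
    -- conclude
    by_contra hcon
    push_neg at hcon
    set s := f x + f y with hs
    set t := f (x + y) with htt
    have hs0 : s ≠ 0 := by
      intro h
      have hx : f x = 0 := by
        have := add_eq_zero.mp h
        exact this.1
      have hy : f y = 0 := (add_eq_zero.mp h).2
      have : t = 0 := by
        rw [htt, (h0 x).mp hx, (h0 y).mp hy]
        simpa using hf0
      rw [this, h] at hcon
      exact lt_irrefl 0 hcon
    have hr : 1 < t / s := by
      rw [lt_div_iff₀ (pos_iff_ne_zero.mpr hs0)]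
      simpa using hcon
    have hrn : ∀ n : ℕ, (t / s) ^ n ≤ 4 * (n + 1) := by
      intro n
      rw [div_pow, div_le_iff₀ (pos_iff_ne_zero.mpr (pow_ne_zero n hs0))]
      exact key n
    -- pass to real numbers
    set ρ : ℝ := ((t / s : ℝ≥0) : ℝ) with hρ
    have hρ1 : 1 < ρ := by exact_mod_cast hr
    obtain ⟨m, hme⟩ := Real.exists_natCast_add_one_lt_pow_of_one_lt hρ1
    have hm1 : 1 ≤ m := by
      by_contra hc
      interval_cases m
      simp at hme
    have h5 : ρ ^ (5 * m) ≤ 4 * (5 * m + 1) := by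
      have h := NNReal.coe_le_coe.mpr (hrn (5 * m))
      push_cast at h
      simpa [hρ, NNReal.coe_div] using h
    have hgt : (4 : ℝ) * (5 * m + 1) < ρ ^ (5 * m) := by
      have h1 : ((m : ℝ) + 1) ^ 5 ≤ (ρ ^ m) ^ 5 :=
        pow_le_pow_left₀ (by positivity) hme.le 5
      have hm1' : (1 : ℝ) ≤ (m : ℝ) := by exact_mod_cast hm1
      have hm0 : (0 : ℝ) ≤ (m : ℝ) := Nat.cast_nonneg m
      have e2 : (4 : ℝ) ≤ ((m : ℝ) + 1) ^ 2 := by nlinarith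
      have e3 : 5 * (m : ℝ) + 1 < ((m : ℝ) + 1) ^ 3 := by
        nlinarith [mul_nonneg (mul_nonneg hm0 hm0) hm0, mul_nonneg (sub_nonneg.mpr hm1') hm0]
      have h2 : (4 : ℝ) * (5 * m + 1) < ((m : ℝ) + 1) ^ 5 := by
        calc (4 : ℝ) * (5 * m + 1) < 4 * ((m : ℝ) + 1) ^ 3 := by linarith
          _ ≤ ((m : ℝ) + 1) ^ 2 * ((m : ℝ) + 1) ^ 3 :=
              mul_le_mul_of_nonneg_right e2 (by positivity)
          _ = ((m : ℝ) + 1) ^ 5 := by ring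
      calc (4 : ℝ) * (5 * m + 1) < ((m : ℝ) + 1) ^ 5 := h2
        _ ≤ (ρ ^ m) ^ 5 := h1
        _ = ρ ^ (5 * m) := by rw [← pow_mul]; ring_nf
    exact absurd h5 (not_le.mpr hgt)
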